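/- Let I = {1,…,N} be a finite index set, θ ∈ ℝ a threshold, m > 0, A ≥ 0 a real number, v : I → ℝ potentials, and H : I × I → ℝ synaptic weights with H j i ≥ m for all i, j ∈ I. If the fired set J of the firing cascade satisfies Card(J) ≥ A and v i + m·A ≥ θ for every i ∈ I, then J = I. -/
import Mathlib


open Finset

open scoped Classical in
/-- Cumulative union `⋃_{q ≤ p} J^q` of the firing cascade. -/
noncomputable def cumFired {N : ℕ} (θ : ℝ) (v : Fin N → ℝ) (H : Fin N → Fin N → ℝ) :
    ℕ → Finset (Fin N)
  | 0 => Finset.univ.filter (fun i => θ ≤ v i)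
  | p + 1 =>
      cumFired θ v H p ∪
        Finset.univ.filter
          (fun i => i ∉ cumFired θ v H p ∧ θ ≤ v i + ∑ j ∈ cumFired θ v H p, H j i)

open scoped Classical in
/-- The set `J^p` of neurons firing at step `p` of the cascade:
`J⁰ = {i : v i ≥ θ}` and
`J^{p+1} = {i ∉ ⋃_{q ≤ p} J^q : v i + ∑_{j ∈ ⋃_{q ≤ p} J^q} H j i ≥ θ}`. -/
noncomputable def fireStep {N : ℕ} (θ : ℝ) (v : Fin N → ℝ) (H : Fin N → Fin N → ℝ) :
    ℕ → Finset (Fin N)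
  | 0 => Finset.univ.filter (fun i => θ ≤ v i)
  | p + 1 =>
      Finset.univ.filter
        (fun i => i ∉ cumFired θ v H p ∧ θ ≤ v i + ∑ j ∈ cumFired θ v H p, H j i)

/-- The fired set `J = ⋃_{p ∈ ℕ} J^p`. -/
def firedSet {N : ℕ} (θ : ℝ) (v : Fin N → ℝ) (H : Fin N → Fin N → ℝ) : Set (Fin N) :=
  {i | ∃ p : ℕ, i ∈ fireStep θ v H p}

open scoped Classical

lemma cumFired_mono {N : ℕ} (θ : ℝ) (v : Fin N → ℝ) (H : Fin N → Fin N → ℝ) :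
    Monotone (cumFired θ v H) := by
  apply monotone_nat_of_le_succ
  intro p
  exact Finset.subset_union_left

lemma fireStep_subset_cumFired {N : ℕ} (θ : ℝ) (v : Fin N → ℝ) (H : Fin N → Fin N → ℝ)
    (p : ℕ) : fireStep θ v H p ⊆ cumFired θ v H p := by
  cases p with
  | zero => exact subset_rfl
  | succ p => exact Finset.subset_union_right

lemma cumFired_subset_firedSet {N : ℕ} (θ : ℝ) (v : Fin N → ℝ) (H : Fin N → Fin N → ℝ)
    (p : ℕ) : ∀ i ∈ cumFired θ v H p, ∃ q, i ∈ fireStep θ v H q := by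
  induction p with
  | zero => exact fun i hi => ⟨0, hi⟩
  | succ p ih =>
      intro i hi
      rcases Finset.mem_union.mp hi with h | h
      · exact ih i h
      · exact ⟨p + 1, h⟩

lemma cumFired_const {N : ℕ} (θ : ℝ) (v : Fin N → ℝ) (H : Fin N → Fin N → ℝ)
    (P : ℕ) (hP : cumFired θ v H (P + 1) = cumFired θ v H P) :
    ∀ k, cumFired θ v H (P + k) = cumFired θ v H P := by
  intro k
  induction k with
  | zero => rfl
  | succ k ih =>
      show cumFired θ v H (P + k + 1) = _
      rw [show cumFired θ v H (P + k + 1) =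
        cumFired θ v H (P + k) ∪ Finset.univ.filter
          (fun i => i ∉ cumFired θ v H (P + k) ∧
            θ ≤ v i + ∑ j ∈ cumFired θ v H (P + k), H j i) from rfl, ih]
      rw [show cumFired θ v H (P + 1) =
        cumFired θ v H P ∪ Finset.univ.filter
          (fun i => i ∉ cumFired θ v H P ∧
            θ ≤ v i + ∑ j ∈ cumFired θ v H P, H j i) from rfl] at hP
      exact hP

lemma exists_stable {N : ℕ} (θ : ℝ) (v : Fin N → ℝ) (H : Fin N → Fin N → ℝ) :
    ∃ P, cumFired θ v H (P + 1) = cumFired θ v H P := by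
  by_contra h
  push_neg at h
  have key : ∀ p, p ≤ (cumFired θ v H p).card := by
    intro p
    induction p with
    | zero => exact Nat.zero_le _
    | succ p ih =>
        have hss : cumFired θ v H p ⊂ cumFired θ v H (p + 1) :=
          Finset.ssubset_iff_subset_ne.mpr
            ⟨cumFired_mono θ v H (Nat.le_succ p), fun he => h p he.symm⟩
        have := Finset.card_lt_card hss
        omega
  have h1 := key (N + 1)
  have h2 : (cumFired θ v H (N + 1)).card ≤ N := by
    simpa using Finset.card_le_card (Finset.subset_univ (cumFired θ v H (N + 1)))
  omega

lemma firedSet_eq_cum {N : ℕ} (θ : ℝ) (v : Fin N → ℝ) (H : Fin N → Fin N → ℝ)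
    (P : ℕ) (hP : cumFired θ v H (P + 1) = cumFired θ v H P) :
    firedSet θ v H = ↑(cumFired θ v H P) := by
  ext i
  constructor
  · rintro ⟨q, hq⟩
    have h1 : i ∈ cumFired θ v H q := fireStep_subset_cumFired θ v H q hq
    have h2 : cumFired θ v H q ⊆ cumFired θ v H (P + q) :=
      cumFired_mono θ v H (Nat.le_add_left q P)
    have := cumFired_const θ v H P hP q
    simpa [this] using h2 h1
  · intro hi
    exact cumFired_subset_firedSet θ v H P i hi

/-- If the fired set `J` of the cascade has cardinality at least `A ≥ 0` and every
potential satisfies `v i + m A ≥ θ`, with all synaptic weights at least `m > 0`,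
then the whole network fires: `J = I`. -/
theorem full_synchronization_of_card_fired {N : ℕ} (θ m A : ℝ) (hm : 0 < m) (hA : 0 ≤ A)
    (v : Fin N → ℝ) (H : Fin N → Fin N → ℝ)
    (hH : ∀ i j : Fin N, m ≤ H j i)
    (hcard : A ≤ ((firedSet θ v H).ncard : ℝ))
    (hv : ∀ i : Fin N, θ ≤ v i + m * A) :
    firedSet θ v H = Set.univ := by
  obtain ⟨P, hP⟩ := exists_stable θ v H
  have hfs := firedSet_eq_cum θ v H P hP
  have hncard : ((firedSet θ v H).ncard : ℝ) = ((cumFired θ v H P).card : ℝ) := by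
    rw [hfs, Set.ncard_coe_finset]
  ext i
  simp only [Set.mem_univ, iff_true]
  rw [hfs]
  by_contra hi
  have hsum : m * A ≤ ∑ j ∈ cumFired θ v H P, H j i := by
    calc m * A ≤ m * (cumFired θ v H P).card := by
          apply mul_le_mul_of_nonneg_left _ hm.le
          rw [← hncard]; exact hcard
      _ = ∑ j ∈ cumFired θ v H P, m := by
          rw [Finset.sum_const, nsmul_eq_mul, mul_comm]
      _ ≤ _ := Finset.sum_le_sum (fun j _ => hH i j)
  have hθ : θ ≤ v i + ∑ j ∈ cumFired θ v H P, H j i :=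
    le_trans (hv i) (by linarith)
  have : i ∈ fireStep θ v H (P + 1) := by
    simp only [fireStep, Finset.mem_filter, Finset.mem_univ, true_and]
    exact ⟨hi, hθ⟩
  have hmem : i ∈ (↑(cumFired θ v H P) : Set (Fin N)) := by
    rw [← hfs]; exact ⟨P + 1, this⟩
  exact hi hmem
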